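/- The function V : ℝ² → ℝ defined by V(x) = 1 − 1/(2 + log(1 + ‖x‖²)) satisfies: (i) ½ ≤ V(x) < 1 for all x ∈ ℝ² and V(x) → 1 as ‖x‖ → ∞; (ii) there exists η > 0 such that |⟨∇V(x), x⟩| ≤ η for all x ∈ ℝ²; (iii) for every x ∈ ℝ², the function t ↦ V(tx) − ½⟨∇V(tx), tx⟩ is nondecreasing on (0, ∞); (iv) V(x) + ½⟨∇V(x), x⟩ ≤ 1 for all x ∈ ℝ². -/

import Mathlib

open Filter
open scoped InnerProductSpace

abbrev E2 := EuclideanSpace ℝ (Fin 2)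

/-- The second example potential of the paper: `V(x) = 1 − 1/(2 + log(1 + ‖x‖²))`. -/
noncomputable def Vex2 (x : E2) : ℝ := 1 - 1 / (2 + Real.log (1 + ‖x‖ ^ 2))

noncomputable def phiV (s : ℝ) : ℝ := 1 - (2 + Real.log (1 + s))⁻¹

lemma phiV_hasDeriv (s : ℝ) (hs : 0 ≤ s) :
    HasDerivAt phiV (((1 + s) * (2 + Real.log (1 + s)) ^ 2)⁻¹) s := by
  have h1 : (0:ℝ) < 1 + s := by linarith
  have hL : 0 ≤ Real.log (1 + s) := Real.log_nonneg (by linarith)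
  have hA : (0:ℝ) < 2 + Real.log (1 + s) := by linarith
  have d1 : HasDerivAt (fun s : ℝ => 2 + Real.log (1 + s)) ((1 + s)⁻¹) s := by
    have := (((hasDerivAt_id s).const_add 1).log h1.ne')
    simpa [one_div] using this.const_add 2
  have d2 := d1.inv hA.ne'
  have d3 := d2.const_sub 1
  refine d3.congr_deriv ?_
  field_simp

lemma vex2_grad (x : E2) :
    HasGradientAt Vex2
      ((2 * ((1 + ‖x‖ ^ 2) * (2 + Real.log (1 + ‖x‖ ^ 2)) ^ 2)⁻¹) • x) x := by
  rw [hasGradientAt_iff_hasFDerivAt]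
  have hg : HasFDerivAt (fun y : E2 => ⟪y, y⟫_ℝ)
      ((fderivInnerCLM ℝ (x, x)).comp
        ((ContinuousLinearMap.id ℝ E2).prod (ContinuousLinearMap.id ℝ E2))) x :=
    (hasFDerivAt_id x).inner ℝ (hasFDerivAt_id x)
  have hg' : HasFDerivAt (fun y : E2 => ‖y‖ ^ 2)
      ((fderivInnerCLM ℝ (x, x)).comp
        ((ContinuousLinearMap.id ℝ E2).prod (ContinuousLinearMap.id ℝ E2))) x := by
    simpa only [real_inner_self_eq_norm_sq] using hg
  have hphi := phiV_hasDeriv (‖x‖ ^ 2) (sq_nonneg _)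
  have hcomp := hphi.comp_hasFDerivAt x hg'
  have hfun : Vex2 = fun y : E2 => phiV (‖y‖ ^ 2) := by
    funext y; simp [Vex2, phiV, one_div]
  rw [hfun]
  refine hcomp.congr_fderiv ?_
  ext y
  simp only [ContinuousLinearMap.smul_apply, ContinuousLinearMap.comp_apply,
    ContinuousLinearMap.prod_apply, ContinuousLinearMap.id_apply,
    fderivInnerCLM_apply, InnerProductSpace.toDual_apply_apply, real_inner_smul_left, smul_eq_mul]
  rw [real_inner_comm y x]
  ring

lemma vex2_inner (x : E2) :
    ⟪gradient Vex2 x, x⟫_ℝ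
      = 2 * ‖x‖ ^ 2 * ((1 + ‖x‖ ^ 2) * (2 + Real.log (1 + ‖x‖ ^ 2)) ^ 2)⁻¹ := by
  rw [(vex2_grad x).gradient, real_inner_smul_left, real_inner_self_eq_norm_sq]
  ring

noncomputable def hV (s : ℝ) : ℝ :=
  phiV s - s * ((1 + s) * (2 + Real.log (1 + s)) ^ 2)⁻¹

lemma hV_hasDeriv (s : ℝ) (hs : 0 ≤ s) :
    HasDerivAt hV
      (s * (4 + Real.log (1 + s)) *
        ((1 + s) ^ 2 * (2 + Real.log (1 + s)) ^ 3)⁻¹) s := by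
  have h1 : (0:ℝ) < 1 + s := by linarith
  have hL : 0 ≤ Real.log (1 + s) := Real.log_nonneg (by linarith)
  have hA : (0:ℝ) < 2 + Real.log (1 + s) := by linarith
  have d1 : HasDerivAt (fun s : ℝ => 2 + Real.log (1 + s)) ((1 + s)⁻¹) s := by
    have := (((hasDerivAt_id s).const_add 1).log h1.ne')
    simpa [one_div] using this.const_add 2
  have db : HasDerivAt (fun s : ℝ => (1 + s) * (2 + Real.log (1 + s)) ^ 2)
      (1 * (2 + Real.log (1 + s)) ^ 2 +
        (1 + s) * (2 * (2 + Real.log (1 + s)) ^ 1 * (1 + s)⁻¹)) s := by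
    exact ((hasDerivAt_id s).const_add 1).mul (d1.pow 2)
  have hBne : (1 + s) * (2 + Real.log (1 + s)) ^ 2 ≠ 0 := by positivity
  have dbinv := db.inv hBne
  have dsecond := (hasDerivAt_id s).mul dbinv
  have dphi := phiV_hasDeriv s hs
  have dtotal := dphi.sub dsecond
  refine dtotal.congr_deriv ?_
  rw [id_eq, Pi.inv_apply]
  field_simp
  ring

lemma hV_mono : MonotoneOn hV (Set.Ici 0) := by
  apply monotoneOn_of_deriv_nonneg (convex_Ici 0)
  · exact fun s hs => ((hV_hasDeriv s hs).continuousAt).continuousWithinAt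
  · rw [interior_Ici]
    exact fun s hs => ((hV_hasDeriv s (le_of_lt hs)).differentiableAt).differentiableWithinAt
  · rw [interior_Ici]
    intro s hs
    rw [(hV_hasDeriv s hs.le).deriv]
    have hL : 0 ≤ Real.log (1 + s) := Real.log_nonneg (by simp at hs; linarith)
    have h1 : (0:ℝ) < 1 + s := by simp at hs; linarith
    have hA : (0:ℝ) < 2 + Real.log (1 + s) := by linarith
    have hs0 : 0 ≤ s := le_of_lt hs
    positivity

/-- `V(x) = 1 − 1/(2 + log(1 + ‖x‖²))` satisfies conditions (V₀) and (V₁)–(V₃)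
with `V_∞ = 1`. -/
theorem stmt16 :
    (∀ x : E2, 1 / 2 ≤ Vex2 x ∧ Vex2 x < 1) ∧
      Tendsto Vex2 (cocompact E2) (nhds 1) ∧
      (∃ η > (0 : ℝ), ∀ x : E2, |⟪gradient Vex2 x, x⟫_ℝ| ≤ η) ∧
      (∀ x : E2, MonotoneOn
        (fun t : ℝ => Vex2 (t • x) - (1 / 2) * ⟪gradient Vex2 (t • x), t • x⟫_ℝ)
        (Set.Ioi 0)) ∧
      (∀ x : E2, Vex2 x + (1 / 2) * ⟪gradient Vex2 x, x⟫_ℝ ≤ 1) := by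
  have key : ∀ x : E2, 0 ≤ Real.log (1 + ‖x‖ ^ 2) := fun x =>
    Real.log_nonneg (by nlinarith [sq_nonneg ‖x‖])
  refine ⟨?_, ?_, ?_, ?_, ?_⟩
  · intro x
    have hL := key x
    have hA : (0:ℝ) < 2 + Real.log (1 + ‖x‖ ^ 2) := by linarith
    constructor
    · have : 1 / (2 + Real.log (1 + ‖x‖ ^ 2)) ≤ 1 / 2 := by
        rw [div_le_div_iff₀ hA (by norm_num)]; linarith
      simp only [Vex2]; linarith
    · have : 0 < 1 / (2 + Real.log (1 + ‖x‖ ^ 2)) := by positivity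
      simp only [Vex2]; linarith
  · have h1 : Tendsto (fun x : E2 => ‖x‖) (cocompact E2) atTop :=
      tendsto_norm_cocompact_atTop
    have h2 : Tendsto (fun x : E2 => 2 + Real.log (1 + ‖x‖ ^ 2)) (cocompact E2) atTop := by
      apply tendsto_atTop_add_const_left
      apply Real.tendsto_log_atTop.comp
      apply tendsto_atTop_add_const_left
      exact (tendsto_pow_atTop two_ne_zero).comp h1
    have h3 : Tendsto (fun x : E2 => 1 / (2 + Real.log (1 + ‖x‖ ^ 2)))
        (cocompact E2) (nhds 0) := by
      simpa [one_div, Function.comp_def] using tendsto_inv_atTop_zero.comp h2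
    have h4 : Tendsto (fun x : E2 => 1 - 1 / (2 + Real.log (1 + ‖x‖ ^ 2)))
        (cocompact E2) (nhds (1 - 0)) := tendsto_const_nhds.sub h3
    rw [show Vex2 = fun x : E2 => 1 - 1 / (2 + Real.log (1 + ‖x‖ ^ 2)) from rfl]
    simpa using h4
  · refine ⟨1, one_pos, fun x => ?_⟩
    rw [vex2_inner]
    have hL := key x
    have hs := sq_nonneg ‖x‖
    have hA : (0:ℝ) < 2 + Real.log (1 + ‖x‖ ^ 2) := by linarith
    have hB : (0:ℝ) < (1 + ‖x‖ ^ 2) * (2 + Real.log (1 + ‖x‖ ^ 2)) ^ 2 := by positivity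
    rw [abs_of_nonneg (by positivity)]
    have hle : 2 * ‖x‖ ^ 2 ≤ (1 + ‖x‖ ^ 2) * (2 + Real.log (1 + ‖x‖ ^ 2)) ^ 2 := by
      have h22 : (4:ℝ) ≤ (2 + Real.log (1 + ‖x‖ ^ 2)) ^ 2 := by nlinarith
      calc 2 * ‖x‖ ^ 2 ≤ (1 + ‖x‖ ^ 2) * 4 := by nlinarith
        _ ≤ (1 + ‖x‖ ^ 2) * (2 + Real.log (1 + ‖x‖ ^ 2)) ^ 2 :=
            mul_le_mul_of_nonneg_left h22 (by positivity)
    calc 2 * ‖x‖ ^ 2 * ((1 + ‖x‖ ^ 2) * (2 + Real.log (1 + ‖x‖ ^ 2)) ^ 2)⁻¹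
        ≤ ((1 + ‖x‖ ^ 2) * (2 + Real.log (1 + ‖x‖ ^ 2)) ^ 2) *
            ((1 + ‖x‖ ^ 2) * (2 + Real.log (1 + ‖x‖ ^ 2)) ^ 2)⁻¹ :=
          mul_le_mul_of_nonneg_right hle (by positivity)
      _ = 1 := mul_inv_cancel₀ hB.ne'
  · intro x
    have heq : (fun t : ℝ => Vex2 (t • x) - (1 / 2) * ⟪gradient Vex2 (t • x), t • x⟫_ℝ)
        = hV ∘ (fun t : ℝ => t ^ 2 * ‖x‖ ^ 2) := by
      funext t
      have hns : ‖t • x‖ ^ 2 = t ^ 2 * ‖x‖ ^ 2 := by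
        rw [norm_smul]; simp [mul_pow, sq_abs]
      simp only [Function.comp_apply, hV, phiV, Vex2, vex2_inner, hns, one_div]
      ring
    rw [heq]
    intro a ha b hb hab
    have hmem : ∀ t : ℝ, t ^ 2 * ‖x‖ ^ 2 ∈ Set.Ici (0:ℝ) := by
      intro t; simp only [Set.mem_Ici]; positivity
    have harg : a ^ 2 * ‖x‖ ^ 2 ≤ b ^ 2 * ‖x‖ ^ 2 := by
      simp only [Set.mem_Ioi] at ha hb
      have : a ^ 2 ≤ b ^ 2 := by nlinarith
      exact mul_le_mul_of_nonneg_right this (sq_nonneg _)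
    exact hV_mono (hmem a) (hmem b) harg
  · intro x
    rw [vex2_inner]
    have hL := key x
    have hs := sq_nonneg ‖x‖
    have hA : (0:ℝ) < 2 + Real.log (1 + ‖x‖ ^ 2) := by linarith
    have hB : (0:ℝ) < (1 + ‖x‖ ^ 2) * (2 + Real.log (1 + ‖x‖ ^ 2)) ^ 2 := by positivity
    have h4 : ‖x‖ ^ 2 * ((1 + ‖x‖ ^ 2) * (2 + Real.log (1 + ‖x‖ ^ 2)) ^ 2)⁻¹
        ≤ (2 + Real.log (1 + ‖x‖ ^ 2))⁻¹ := by
      rw [← div_eq_mul_inv, ← one_div, div_le_div_iff₀ hB hA]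
      nlinarith
    have hone : 1 / (2 + Real.log (1 + ‖x‖ ^ 2)) = (2 + Real.log (1 + ‖x‖ ^ 2))⁻¹ :=
      one_div _
    simp only [Vex2, hone]
    nlinarith [h4]
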